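/- There exists a finite simple bipartite graph of maximum degree at most 3, with two designated distinct input edges and two designated distinct output edges, such that: (i) in every distance-2 edge coloring with 5 colors in which one input edge receives color T and the other receives color F (for two fixed distinct colors T and F among the 5), the two output edges receive the colors T and F in some order; and (ii) both orders occur, i.e., there is such a coloring giving the first output edge color T and the second color F, and another such coloring giving the first output edge color F and the second color T. (This is the defining property of the variable gadget.) -/

import Mathlib

open SimpleGraph

/-- Two edges `e` and `f` of a simple graph `G` are within distance 2 of each other:
they are distinct edges of `G` and either they are adjacent (share an endpoint) or
there is some other edge of `G` adjacent to both of them. -/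
def WithinDist2 {V : Type*} (G : SimpleGraph V) (e f : Sym2 V) : Prop :=
  e ∈ G.edgeSet ∧ f ∈ G.edgeSet ∧ e ≠ f ∧
    ((∃ v, v ∈ e ∧ v ∈ f) ∨
      ∃ g ∈ G.edgeSet, g ≠ e ∧ g ≠ f ∧ (∃ v, v ∈ e ∧ v ∈ g) ∧ (∃ v, v ∈ g ∧ v ∈ f))

/-- A distance-2 edge coloring (strong edge coloring) of `G` with `k` colors:
any two distinct edges within distance 2 of each other receive distinct colors. -/
def IsD2EdgeColoring {V : Type*} (G : SimpleGraph V) (k : ℕ) (c : Sym2 V → Fin k) : Prop :=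
  ∀ e f : Sym2 V, WithinDist2 G e f → c e ≠ c f

/-- Adjacency list of the gadget tree:
`0 - 1 - 2 - 3 - 4`, with `2 - 5`, `5 - 6`, `5 - 7`. -/
def gadgetAdjL : List (Fin 8 × Fin 8) := [(0,1),(1,2),(2,3),(3,4),(2,5),(5,6),(5,7)]

/-- The gadget graph. -/
def gadgetG : SimpleGraph (Fin 8) where
  Adj a b := (a,b) ∈ gadgetAdjL ∨ (b,a) ∈ gadgetAdjL
  symm := by constructor; intro a b h; exact h.symm
  loopless := by constructor; intro a; fin_cases a <;> decide

instance : DecidableRel gadgetG.Adj := fun a b =>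
  inferInstanceAs (Decidable ((a,b) ∈ gadgetAdjL ∨ (b,a) ∈ gadgetAdjL))

instance (e f : Sym2 (Fin 8)) : Decidable (WithinDist2 gadgetG e f) := by
  unfold WithinDist2; infer_instance

/-- Base coloring realizing output order (T, F) with T = 0, F = 1. -/
def gadgetC0 : Sym2 (Fin 8) → Fin 5 := fun s =>
  if s = s(0,1) then 0 else if s = s(3,4) then 1 else
  if s = s(1,2) then 2 else if s = s(2,3) then 3 else
  if s = s(2,5) then 4 else if s = s(5,6) then 0 else
  if s = s(5,7) then 1 else 0

/-- Base coloring realizing output order (F, T) with T = 0, F = 1. -/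
def gadgetC1 : Sym2 (Fin 8) → Fin 5 := fun s =>
  if s = s(0,1) then 0 else if s = s(3,4) then 1 else
  if s = s(1,2) then 2 else if s = s(2,3) then 3 else
  if s = s(2,5) then 4 else if s = s(5,6) then 1 else
  if s = s(5,7) then 0 else 0

set_option maxRecDepth 100000 in
lemma gadgetC0_ok : IsD2EdgeColoring gadgetG 5 gadgetC0 := by
  unfold IsD2EdgeColoring; decide

set_option maxRecDepth 100000 in
lemma gadgetC1_ok : IsD2EdgeColoring gadgetG 5 gadgetC1 := by
  unfold IsD2EdgeColoring; decide

lemma fin5_pigeonhole (T F a b d x y : Fin 5)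
    (hTF : T ≠ F) (hab : a ≠ b) (had : a ≠ d) (hbd : b ≠ d)
    (hTa : T ≠ a) (hTb : T ≠ b) (hTd : T ≠ d)
    (hFa : F ≠ a) (hFb : F ≠ b) (hFd : F ≠ d)
    (hxy : x ≠ y) (hxa : x ≠ a) (hxb : x ≠ b) (hxd : x ≠ d)
    (hya : y ≠ a) (hyb : y ≠ b) (hyd : y ≠ d) :
    (x = T ∧ y = F) ∨ (x = F ∧ y = T) := by
  have hcard : ({T,F,a,b,d} : Finset (Fin 5)).card = 5 := by
    rw [Finset.card_insert_of_notMem (by simp [hTF, hTa, hTb, hTd]),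
        Finset.card_insert_of_notMem (by simp [hFa, hFb, hFd]),
        Finset.card_insert_of_notMem (by simp [hab, had]),
        Finset.card_insert_of_notMem (by simp [hbd]),
        Finset.card_singleton]
  have huniv : ({T,F,a,b,d} : Finset (Fin 5)) = Finset.univ :=
    Finset.eq_univ_of_card _ (by simp [hcard])
  have hx : x = T ∨ x = F := by
    have := huniv ▸ Finset.mem_univ x
    simp only [Finset.mem_insert, Finset.mem_singleton] at this
    tauto
  have hy : y = T ∨ y = F := by
    have := huniv ▸ Finset.mem_univ y
    simp only [Finset.mem_insert, Finset.mem_singleton] at this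
    tauto
  cases hx <;> cases hy <;> simp_all

lemma exists_perm (T F : Fin 5) (h : T ≠ F) :
    ∃ σ : Fin 5 → Fin 5, Function.Injective σ ∧ σ 0 = T ∧ σ 1 = F := by
  refine ⟨fun x => Equiv.swap 0 T (Equiv.swap 1 (Equiv.swap 0 T F) x),
    ((Equiv.swap 0 T).injective.comp (Equiv.swap 1 _).injective), ?_, ?_⟩
  · have h0 : (0 : Fin 5) ≠ Equiv.swap 0 T F := by
      intro hc
      exact h ((Equiv.swap 0 T).injective ((Equiv.swap_apply_right 0 T).trans hc).symm).symm
    show Equiv.swap 0 T (Equiv.swap 1 (Equiv.swap 0 T F) 0) = T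
    rw [Equiv.swap_apply_of_ne_of_ne (by decide : (0:Fin 5) ≠ 1) h0]
    exact Equiv.swap_apply_left 0 T
  · show Equiv.swap 0 T (Equiv.swap 1 (Equiv.swap 0 T F) 1) = F
    rw [Equiv.swap_apply_left]
    exact Equiv.swap_apply_self _ _ _

set_option maxHeartbeats 1000000 in
/-- The variable gadget: a finite simple bipartite graph of maximum degree at most 3 with
two distinct designated input edges `i₁, i₂` and two distinct designated output edges
`o₁, o₂` such that, for any two fixed distinct colors `T` and `F` among the 5:
(i) every distance-2 edge coloring with 5 colors giving `i₁` color `T` and `i₂` color `F`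
gives the output edges the colors `T` and `F` in some order, and (ii) both orders occur. -/
theorem variable_gadget_exists :
    ∃ (V : Type) (_ : Fintype V) (G : SimpleGraph V) (i₁ i₂ o₁ o₂ : Sym2 V),
      G.Colorable 2 ∧
      (∀ v : V, (G.neighborSet v).ncard ≤ 3) ∧
      i₁ ∈ G.edgeSet ∧ i₂ ∈ G.edgeSet ∧ o₁ ∈ G.edgeSet ∧ o₂ ∈ G.edgeSet ∧
      i₁ ≠ i₂ ∧ o₁ ≠ o₂ ∧
      ∀ T F : Fin 5, T ≠ F →
        (∀ c : Sym2 V → Fin 5, IsD2EdgeColoring G 5 c → c i₁ = T → c i₂ = F →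
            (c o₁ = T ∧ c o₂ = F) ∨ (c o₁ = F ∧ c o₂ = T)) ∧
        (∃ c : Sym2 V → Fin 5, IsD2EdgeColoring G 5 c ∧
            c i₁ = T ∧ c i₂ = F ∧ c o₁ = T ∧ c o₂ = F) ∧
        (∃ c : Sym2 V → Fin 5, IsD2EdgeColoring G 5 c ∧
            c i₁ = T ∧ c i₂ = F ∧ c o₁ = F ∧ c o₂ = T) := by
  refine ⟨Fin 8, inferInstance, gadgetG, s(0,1), s(3,4), s(5,6), s(5,7),
    ⟨SimpleGraph.Coloring.mk (![0,1,0,1,0,1,0,0] : Fin 8 → Fin 2) (by decide)⟩,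
    ?_, by decide, by decide, by decide, by decide, by decide, by decide, ?_⟩
  · intro v
    rw [Set.ncard_eq_toFinset_card']
    revert v; decide
  · intro T F hTF
    refine ⟨?_, ?_, ?_⟩
    · intro c hc h1 h2
      have w1 := hc s(1,2) s(2,3) (by decide)
      have w2 := hc s(1,2) s(2,5) (by decide)
      have w3 := hc s(2,3) s(2,5) (by decide)
      have w4 := hc s(0,1) s(1,2) (by decide)
      have w5 := hc s(0,1) s(2,3) (by decide)
      have w6 := hc s(0,1) s(2,5) (by decide)
      have w7 := hc s(3,4) s(1,2) (by decide)
      have w8 := hc s(3,4) s(2,3) (by decide)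
      have w9 := hc s(3,4) s(2,5) (by decide)
      have w10 := hc s(5,6) s(5,7) (by decide)
      have w11 := hc s(5,6) s(1,2) (by decide)
      have w12 := hc s(5,6) s(2,3) (by decide)
      have w13 := hc s(5,6) s(2,5) (by decide)
      have w14 := hc s(5,7) s(1,2) (by decide)
      have w15 := hc s(5,7) s(2,3) (by decide)
      have w16 := hc s(5,7) s(2,5) (by decide)
      rw [h1] at w4 w5 w6
      rw [h2] at w7 w8 w9
      exact fin5_pigeonhole T F _ _ _ _ _ hTF w1 w2 w3 w4 w5 w6 w7 w8 w9
        w10 w11 w12 w13 w14 w15 w16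
    · obtain ⟨σ, hinj, hσ0, hσ1⟩ := exists_perm T F hTF
      refine ⟨σ ∘ gadgetC0, fun e f h heq => gadgetC0_ok e f h (hinj heq), ?_, ?_, ?_, ?_⟩
      · show σ (gadgetC0 s(0,1)) = T
        rw [(by decide : gadgetC0 s(0,1) = (0:Fin 5))]; exact hσ0
      · show σ (gadgetC0 s(3,4)) = F
        rw [(by decide : gadgetC0 s(3,4) = (1:Fin 5))]; exact hσ1
      · show σ (gadgetC0 s(5,6)) = T
        rw [(by decide : gadgetC0 s(5,6) = (0:Fin 5))]; exact hσ0
      · show σ (gadgetC0 s(5,7)) = F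
        rw [(by decide : gadgetC0 s(5,7) = (1:Fin 5))]; exact hσ1
    · obtain ⟨σ, hinj, hσ0, hσ1⟩ := exists_perm T F hTF
      refine ⟨σ ∘ gadgetC1, fun e f h heq => gadgetC1_ok e f h (hinj heq), ?_, ?_, ?_, ?_⟩
      · show σ (gadgetC1 s(0,1)) = T
        rw [(by decide : gadgetC1 s(0,1) = (0:Fin 5))]; exact hσ0
      · show σ (gadgetC1 s(3,4)) = F
        rw [(by decide : gadgetC1 s(3,4) = (1:Fin 5))]; exact hσ1
      · show σ (gadgetC1 s(5,6)) = F
        rw [(by decide : gadgetC1 s(5,6) = (1:Fin 5))]; exact hσ1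
      · show σ (gadgetC1 s(5,7)) = T
        rw [(by decide : gadgetC1 s(5,7) = (0:Fin 5))]; exact hσ0
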